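/- Let β₁, β₂ ∈ ℝ³ with ‖β₁‖ < 1 and ‖β₂‖ < 1, and suppose D is a real 3×3 matrix such that B(β₁) * B(β₂) = B(β₁ ⋆ β₂) * R(D) (i.e. D is the Thomas rotation of the pair (β₁, β₂)). Then D maps the oppositely composed velocity to the composed velocity: D · (β₂ ⋆ β₁) = β₁ ⋆ β₂. -/

import Mathlib

open Matrix

noncomputable section

/-- Euclidean dot product on `ℝ³`. -/
def dot3 (u v : Fin 3 → ℝ) : ℝ := ∑ i, u i * v i

/-- The Lorentz factor `γ(β) = 1/√(1 - ‖β‖²)`. -/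
def gam (β : Fin 3 → ℝ) : ℝ := 1 / Real.sqrt (1 - dot3 β β)

/-- The Lorentz boost with velocity `β`, as a 4×4 matrix over `Unit ⊕ Fin 3`
(the `Unit` index is the time coordinate): time-time entry `γ`, time-space and
space-time entries `γ βᵢ`, space-space entries `δᵢⱼ + (γ²/(1+γ)) βᵢ βⱼ`. -/
def boost (β : Fin 3 → ℝ) : Matrix (Unit ⊕ Fin 3) (Unit ⊕ Fin 3) ℝ :=
  Matrix.fromBlocks (Matrix.of fun _ _ => gam β)
    (Matrix.of fun _ j => gam β * β j)
    (Matrix.of fun i _ => gam β * β i)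
    ((1 : Matrix (Fin 3) (Fin 3) ℝ) + ((gam β) ^ 2 / (1 + gam β)) • Matrix.vecMulVec β β)

/-- The spatial rotation `R(D) = diag(1, D)` as a 4×4 matrix. -/
def rot (D : Matrix (Fin 3) (Fin 3) ℝ) : Matrix (Unit ⊕ Fin 3) (Unit ⊕ Fin 3) ℝ :=
  Matrix.fromBlocks 1 0 0 D

/-- Relativistic composition of velocities:
`β₁ ⋆ β₂ = [β₁ + γ₁⁻¹ β₂ + (γ₁/(1+γ₁)) (β₁·β₂) β₁] / (1 + β₁·β₂)`. -/
def vcomp (β₁ β₂ : Fin 3 → ℝ) : Fin 3 → ℝ :=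
  (1 / (1 + dot3 β₁ β₂)) •
    (β₁ + (gam β₁)⁻¹ • β₂ + (gam β₁ / (1 + gam β₁)) • dot3 β₁ β₂ • β₁)

end

section aux

lemma dot3_comm' (x y : Fin 3 → ℝ) : dot3 x y = dot3 y x := by simp [dot3, mul_comm]

lemma dot3_add_right' (x y z : Fin 3 → ℝ) : dot3 x (y + z) = dot3 x y + dot3 x z := by
  simp [dot3, mul_add, Finset.sum_add_distrib]

lemma dot3_smul_right' (x y : Fin 3 → ℝ) (a : ℝ) : dot3 x (a • y) = a * dot3 x y := by
  simp [dot3, Finset.mul_sum]; apply Finset.sum_congr rfl; intros; ring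

lemma dot3_nonneg' (x : Fin 3 → ℝ) : 0 ≤ dot3 x x :=
  Finset.sum_nonneg fun _ _ => mul_self_nonneg _

lemma dot3_sq_le' (x y : Fin 3 → ℝ) : dot3 x y ^ 2 ≤ dot3 x x * dot3 y y := by
  simpa [dot3, sq] using Finset.sum_mul_sq_le_sq_mul_sq Finset.univ x y

lemma one_le_gam' {β : Fin 3 → ℝ} (h : dot3 β β < 1) : 1 ≤ gam β := by
  have h0 := dot3_nonneg' β
  have hs : Real.sqrt (1 - dot3 β β) ≤ 1 := Real.sqrt_le_one.mpr (by linarith)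
  have hs0 : 0 < Real.sqrt (1 - dot3 β β) := Real.sqrt_pos.mpr (by linarith)
  rw [gam, le_div_iff₀ hs0, one_mul]
  exact hs

lemma gam_sq' {β : Fin 3 → ℝ} (h : dot3 β β < 1) : gam β ^ 2 * (1 - dot3 β β) = 1 := by
  rw [gam, div_pow, one_pow, Real.sq_sqrt (by linarith)]
  rw [div_mul_cancel₀]; linarith

lemma dot3_vcomp' (x b1 b2 : Fin 3 → ℝ) :
    dot3 x (vcomp b1 b2) = (1 / (1 + dot3 b1 b2)) *
      (dot3 x b1 + (gam b1)⁻¹ * dot3 x b2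
        + gam b1 / (1 + gam b1) * (dot3 b1 b2 * dot3 x b1)) := by
  simp [vcomp, dot3_add_right', dot3_smul_right']
  try ring

lemma vcomp_apply' (b1 b2 : Fin 3 → ℝ) (i : Fin 3) :
    vcomp b1 b2 i = (1 / (1 + dot3 b1 b2)) *
      (b1 i + (gam b1)⁻¹ * b2 i + gam b1 / (1 + gam b1) * (dot3 b1 b2 * b1 i)) := by
  simp [vcomp]
  try ring

end aux

set_option maxHeartbeats 4000000 in
open Matrix in
/-- The Thomas rotation maps the oppositely composed velocity to the composed
velocity: `D · (β₂ ⋆ β₁) = β₁ ⋆ β₂`. -/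
theorem thomas_rotation_maps_vcomp (β₁ β₂ : Fin 3 → ℝ)
    (h₁ : dot3 β₁ β₁ < 1) (h₂ : dot3 β₂ β₂ < 1)
    (D : Matrix (Fin 3) (Fin 3) ℝ)
    (hD : boost β₁ * boost β₂ = boost (vcomp β₁ β₂) * rot D) :
    D *ᵥ vcomp β₂ β₁ = vcomp β₁ β₂ := by
  set v := vcomp β₁ β₂ with hv
  set u := vcomp β₂ β₁ with hu
  set g1 := gam β₁ with hg1def
  set g2 := gam β₂ with hg2def
  set d := dot3 β₁ β₂ with hddef
  -- basic facts
  have hdc : dot3 β₂ β₁ = d := dot3_comm' β₂ β₁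
  have hg1 : 1 ≤ g1 := one_le_gam' h₁
  have hg2 : 1 ≤ g2 := one_le_gam' h₂
  have hg1pos : (0:ℝ) < g1 := by linarith
  have hg2pos : (0:ℝ) < g2 := by linarith
  have hn1 : dot3 β₁ β₁ = 1 - 1 / g1 ^ 2 := by
    have := gam_sq' h₁; field_simp at this ⊢; linarith
  have hn2 : dot3 β₂ β₂ = 1 - 1 / g2 ^ 2 := by
    have := gam_sq' h₂; field_simp at this ⊢; linarith
  have hdpos : (0:ℝ) < 1 + d := by
    have hcs := dot3_sq_le' β₁ β₂
    have h0 := dot3_nonneg' β₁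
    have h0' := dot3_nonneg' β₂
    nlinarith
  have hdne : (1:ℝ) + d ≠ 0 := ne_of_gt hdpos
  have hg1ne : g1 ≠ 0 := ne_of_gt hg1pos
  have hg2ne : g2 ≠ 0 := ne_of_gt hg2pos
  have h1g1 : (1:ℝ) + g1 ≠ 0 := by positivity
  have h1g2 : (1:ℝ) + g2 ≠ 0 := by positivity
  have hGpos : (0:ℝ) < g1 * g2 * (1 + d) := by positivity
  have hGne : g1 * g2 * (1 + d) ≠ 0 := ne_of_gt hGpos
  have h1G : (1:ℝ) + g1 * g2 * (1 + d) ≠ 0 := by positivity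
  -- dot products with v and u
  have hb1v : dot3 β₁ v = (1/(1+d)) * (dot3 β₁ β₁ + g1⁻¹ * d + g1/(1+g1) * (d * dot3 β₁ β₁)) := by
    have e := dot3_vcomp' β₁ β₁ β₂
    simp only [← hv, ← hg1def, ← hddef] at e
    exact e
  have hb2v : dot3 β₂ v = (1/(1+d)) * (d + g1⁻¹ * dot3 β₂ β₂ + g1/(1+g1) * (d * d)) := by
    have e := dot3_vcomp' β₂ β₁ β₂
    simp only [← hv, ← hg1def, ← hddef, dot3_comm' β₂ β₁, hdc] at e
    exact e
  have hvv : dot3 v v = 1 - 1 / (g1 * g2 * (1 + d))^2 := by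
    have e := dot3_vcomp' v β₁ β₂
    simp only [← hv, ← hg1def, ← hddef] at e
    rw [e, dot3_comm' v β₁, dot3_comm' v β₂, hb1v, hb2v, hn1, hn2]
    field_simp
    ring
  have hb2u : dot3 β₂ u = (1/(1+d)) * (dot3 β₂ β₂ + g2⁻¹ * d + g2/(1+g2) * (d * dot3 β₂ β₂)) := by
    have e := dot3_vcomp' β₂ β₂ β₁
    simp only [← hu, ← hg2def, hdc] at e
    exact e
  have hb1u : dot3 β₁ u = (1/(1+d)) * (d + g2⁻¹ * dot3 β₁ β₁ + g2/(1+g2) * (d * d)) := by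
    have e := dot3_vcomp' β₁ β₂ β₁
    simp only [← hu, ← hg2def, hdc, ← hddef] at e
    exact e
  have huu : dot3 u u = 1 - 1 / (g1 * g2 * (1 + d))^2 := by
    have e := dot3_vcomp' u β₂ β₁
    simp only [← hu, ← hg2def, hdc] at e
    rw [e, dot3_comm' u β₁, dot3_comm' u β₂, hb1u, hb2u, hn1, hn2]
    field_simp
    ring
  -- gamma composition
  have hvv1 : dot3 v v < 1 := by
    rw [hvv]; have : 0 < 1 / (g1 * g2 * (1+d))^2 := by positivity
    linarith
  have hgv : gam v = g1 * g2 * (1 + d) := by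
    have e1 : gam v ^ 2 * (1 - dot3 v v) = 1 := gam_sq' hvv1
    have e2 : (g1 * g2 * (1 + d)) ^ 2 * (1 - dot3 v v) = 1 := by
      rw [hvv]; field_simp; ring
    have hne : (1:ℝ) - dot3 v v ≠ 0 := by
      rw [hvv]; have : 0 < 1 / (g1 * g2 * (1+d))^2 := by positivity
      linarith
    have e3 : gam v ^ 2 = (g1 * g2 * (1 + d)) ^ 2 :=
      mul_right_cancel₀ hne (by rw [e1, e2])
    have hgvpos : 0 < gam v := lt_of_lt_of_le one_pos (one_le_gam' hvv1)
    have := congrArg Real.sqrt e3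
    rwa [Real.sqrt_sq hgvpos.le, Real.sqrt_sq hGpos.le] at this
  -- extract the time-space block of hD
  have hvecD : ∀ j, (∑ x, v x * D x j) = u j := by
    intro j
    have htr := congrFun (congrFun hD (Sum.inl ())) (Sum.inr j)
    simp only [boost, rot, Matrix.mul_apply, Fintype.sum_sum_type, Matrix.fromBlocks_apply₁₁,
      Matrix.fromBlocks_apply₁₂, Matrix.fromBlocks_apply₂₁, Matrix.fromBlocks_apply₂₂,
      Matrix.of_apply, Matrix.add_apply, Matrix.smul_apply, Matrix.vecMulVec_apply,
      Matrix.one_apply, smul_eq_mul, Finset.univ_unique, Finset.sum_singleton,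
      Matrix.zero_apply, mul_zero, zero_add, mul_one] at htr
    simp only [← hg1def, ← hg2def, ← hddef] at htr
    rw [show (∑ x, (g1 * β₁ x) * ((if x = j then 1 else 0) + g2 ^ 2 / (1 + g2) * (β₂ x * β₂ j)))
        = g1 * β₁ j + g1 * (g2 ^ 2 / (1 + g2)) * d * β₂ j from ?_] at htr
    · rw [show (∑ x, gam v * v x * D x j) = gam v * ∑ x, v x * D x j from ?_] at htr
      · rw [hgv] at htr
        apply mul_left_cancel₀ hGne
        rw [← htr, hu, vcomp_apply' β₂ β₁ j]
        simp only [hdc, ← hg2def]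
        field_simp
        ring
      · rw [Finset.mul_sum]
        exact Finset.sum_congr rfl fun x _ => by ring
    · have : ∀ x, (g1 * β₁ x) * ((if x = j then 1 else 0) + g2 ^ 2 / (1 + g2) * (β₂ x * β₂ j))
          = (if x = j then g1 * β₁ x else 0) + g1 * (g2^2/(1+g2)) * β₂ j * (β₁ x * β₂ x) := by
        intro x
        rcases eq_or_ne x j with h|h
        · simp only [if_pos h]; ring
        · simp only [if_neg h]; ring
      rw [Finset.sum_congr rfl fun x _ => this x, Finset.sum_add_distrib,
        Finset.sum_ite_eq' Finset.univ j, ← Finset.mul_sum]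
      simp [hddef, dot3]
      ring
  -- extract the space-space block of hD
  have hDij : ∀ i j, D i j = g1 * β₁ i * (g2 * β₂ j) + (if i = j then 1 else 0)
      + g2^2/(1+g2) * (β₂ i * β₂ j) + g1^2/(1+g1) * (β₁ i * β₁ j)
      + g1^2/(1+g1) * (g2^2/(1+g2)) * d * (β₁ i * β₂ j)
      - gam v ^2/(1+gam v) * v i * u j := by
    intro i j
    have hss := congrFun (congrFun hD (Sum.inr i)) (Sum.inr j)
    simp only [boost, rot, Matrix.mul_apply, Fintype.sum_sum_type, Matrix.fromBlocks_apply₁₁,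
      Matrix.fromBlocks_apply₁₂, Matrix.fromBlocks_apply₂₁, Matrix.fromBlocks_apply₂₂,
      Matrix.of_apply, Matrix.add_apply, Matrix.smul_apply, Matrix.vecMulVec_apply,
      Matrix.one_apply, smul_eq_mul, Finset.univ_unique, Finset.sum_singleton,
      Matrix.zero_apply, mul_zero, zero_mul, zero_add, add_zero, mul_one] at hss
    simp only [← hg1def, ← hg2def, ← hddef] at hss
    rw [show (∑ x, ((if i = x then 1 else 0) + g1 ^ 2 / (1 + g1) * (β₁ i * β₁ x))
          * ((if x = j then 1 else 0) + g2 ^ 2 / (1 + g2) * (β₂ x * β₂ j)))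
        = (if i = j then 1 else 0) + g2^2/(1+g2) * (β₂ i * β₂ j)
          + g1^2/(1+g1) * (β₁ i * β₁ j)
          + g1^2/(1+g1) * (g2^2/(1+g2)) * d * (β₁ i * β₂ j) from ?_] at hss
    · rw [show (∑ x, ((if i = x then 1 else 0) + gam v ^ 2 / (1 + gam v) * (v i * v x)) * D x j)
          = D i j + gam v ^2/(1+gam v) * v i * ∑ x, v x * D x j from ?_] at hss
      · rw [hvecD j] at hss
        linarith [hss]
      · have e : ∀ x, ((if i = x then (1:ℝ) else 0) + gam v ^ 2 / (1 + gam v) * (v i * v x)) * D x j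
            = (if i = x then D x j else 0) + gam v ^2/(1+gam v) * v i * (v x * D x j) := by
          intro x
          rcases eq_or_ne i x with h|h
          · simp only [if_pos h]; ring
          · simp only [if_neg h]; ring
        rw [Finset.sum_congr rfl fun x _ => e x, Finset.sum_add_distrib,
          Finset.sum_ite_eq Finset.univ i, ← Finset.mul_sum]
        simp only [Finset.mem_univ, if_true]
    · have e2 : ∀ x, ((if i = x then (1:ℝ) else 0) + g1 ^ 2 / (1 + g1) * (β₁ i * β₁ x))
          * ((if x = j then (1:ℝ) else 0) + g2 ^ 2 / (1 + g2) * (β₂ x * β₂ j))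
          = (if i = x then (if x = j then (1:ℝ) else 0) + g2^2/(1+g2) * (β₂ x * β₂ j) else 0)
            + (if x = j then g1^2/(1+g1) * (β₁ i * β₁ x) else 0)
            + g1^2/(1+g1) * (g2^2/(1+g2)) * (β₁ i * β₂ j) * (β₁ x * β₂ x) := by
        intro x
        rcases eq_or_ne i x with h|h <;> rcases eq_or_ne x j with h2|h2
        · simp only [if_pos h, if_pos h2]; ring
        · simp only [if_pos h, if_neg h2]; ring
        · simp only [if_neg h, if_pos h2]; ring
        · simp only [if_neg h, if_neg h2]; ring
      rw [Finset.sum_congr rfl fun x _ => e2 x, Finset.sum_add_distrib,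
        Finset.sum_add_distrib, Finset.sum_ite_eq Finset.univ i,
        Finset.sum_ite_eq' Finset.univ j, ← Finset.mul_sum]
      simp only [Finset.mem_univ, if_true]
      rw [show (∑ x, β₁ x * β₂ x) = d from rfl]
      rcases eq_or_ne i j with h|h
      · simp only [if_pos h]; ring
      · simp only [if_neg h]; ring
  -- final computation
  funext i
  rw [Matrix.mulVec, dotProduct]
  have key : (∑ j, D i j * u j)
      = g1 * g2 * β₁ i * dot3 β₂ u + u i + g2^2/(1+g2) * β₂ i * dot3 β₂ u
        + g1^2/(1+g1) * β₁ i * dot3 β₁ u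
        + g1^2/(1+g1) * (g2^2/(1+g2)) * d * β₁ i * dot3 β₂ u
        - gam v ^2/(1+gam v) * v i * dot3 u u := by
    have : ∀ j, D i j * u j
        = g1 * g2 * β₁ i * (β₂ j * u j) + (if j = i then u j else 0)
          + g2^2/(1+g2) * β₂ i * (β₂ j * u j) + g1^2/(1+g1) * β₁ i * (β₁ j * u j)
          + g1^2/(1+g1) * (g2^2/(1+g2)) * d * β₁ i * (β₂ j * u j)
          - gam v ^2/(1+gam v) * v i * (u j * u j) := by
      intro j
      rw [hDij i j]
      rcases eq_or_ne j i with h|h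
      · simp only [if_pos h, if_pos h.symm]; ring
      · simp only [if_neg h, if_neg (Ne.symm h)]; ring
    rw [Finset.sum_congr rfl fun j _ => this j]
    simp only [Finset.sum_add_distrib, Finset.sum_sub_distrib, ← Finset.mul_sum,
      Finset.sum_ite_eq Finset.univ i, Finset.sum_ite_eq' Finset.univ i,
      Finset.mem_univ, if_true]
    rw [show (∑ j, β₂ j * u j) = dot3 β₂ u from rfl, show (∑ j, β₁ j * u j) = dot3 β₁ u from rfl,
      show (∑ j, u j * u j) = dot3 u u from rfl]
  rw [key, hb1u, hb2u, huu, hgv, hn1, hn2, hu, hv, vcomp_apply' β₂ β₁ i, vcomp_apply' β₁ β₂ i]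
  simp only [hdc, ← hddef, ← hg1def, ← hg2def]
  field_simp
  ring
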